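/- Fix M > 0 and L > 0, and let λ ∈ ℂ be such that λ + nL ≠ 0 for all n ∈ ℤ. Then ((λ−M)(λ+M)/λ²) · ∏_{n=1}^∞ [ ((λ+nL)² − M²)((λ−nL)² − M²) / ( (λ+nL)² (λ−nL)² ) ] = sin(π(λ−M)/L) sin(π(λ+M)/L) / sin²(πλ/L), with the infinite product converging. Consequently the monodromy matrix of the periodic Schwarzschild solution, obtained as the product ∏_{n∈ℤ} T₀(λ+nL) of the shifted Schwarzschild monodromy matrices T₀(λ) = −((λ−M)(λ+M)/λ²) σ₃, equals T(λ) = −( sin(π(λ−M)/L) sin(π(λ+M)/L) / sin²(πλ/L) ) σ₃, where σ₃ is the diagonal Pauli matrix diag(1,−1). -/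

import Mathlib

open scoped Matrix
open Filter Topology

/-- The diagonal Pauli matrix `σ₃ = diag(1, −1)`. -/
noncomputable def pauli3 : Matrix (Fin 2) (Fin 2) ℂ := !![1, 0; 0, -1]

/-- The monodromy matrix of the Schwarzschild solution with mass `M`:
`T₀(λ) = −((λ−M)(λ+M)/λ²) σ₃`. -/
noncomputable def schwT (M : ℝ) (lam : ℂ) : Matrix (Fin 2) (Fin 2) ℂ :=
  (-((lam - (M : ℂ)) * (lam + (M : ℂ)) / lam^2)) • pauli3

private lemma myHasProd_zero {f : ℕ → ℂ} {i : ℕ} (h : f i = 0) : HasProd f 0 := by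
  have hev : ∀ᶠ s : Finset ℕ in atTop, ∏ j ∈ s, f j = 0 := by
    filter_upwards [Filter.eventually_ge_atTop ({i} : Finset ℕ)] with s hs
    exact Finset.prod_eq_zero (hs (Finset.mem_singleton_self i)) h
  exact tendsto_const_nhds.congr' (hev.mono fun s hs => hs.symm)

private lemma myMultipliable {f : ℕ → ℂ} (h : Summable (fun n => f n - 1)) : Multipliable f := by
  by_cases hz : ∃ i, f i = 0
  · obtain ⟨i, hi⟩ := hz; exact ⟨0, myHasProd_zero hi⟩
  push_neg at hz
  apply Complex.multipliable_of_summable_log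
  have h0 : Tendsto (fun n => ‖f n - 1‖) atTop (𝓝 0) := by
    simpa using h.tendsto_atTop_zero.norm
  have hev : ∀ᶠ n in atTop, ‖Complex.log (f n)‖ ≤ (3/2) * ‖f n - 1‖ := by
    filter_upwards [h0.eventually_le_const (by norm_num : (0:ℝ) < 1/2)] with n hn
    have := Complex.norm_log_one_add_half_le_self (z := f n - 1) hn
    simpa using this
  exact Summable.of_norm_bounded_eventually_nat (h.norm.mul_left (3/2)) hev

private lemma pauli3_sq : pauli3 * pauli3 = 1 := by
  rw [pauli3, Matrix.mul_fin_two, Matrix.one_fin_two]; norm_num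

private lemma schwT_pair (M : ℝ) (x y : ℂ) :
    schwT M x * schwT M y =
      (((x - M) * (x + M) / x^2) * ((y - M) * (y + M) / y^2)) • (1 : Matrix (Fin 2) (Fin 2) ℂ) := by
  rw [schwT, schwT, Matrix.smul_mul, Matrix.mul_smul, pauli3_sq, smul_smul]
  ring_nf

private lemma list_prod_smul_one (c : ℕ → ℂ) (N : ℕ) :
    ((List.range N).map (fun n => c n • (1 : Matrix (Fin 2) (Fin 2) ℂ))).prod
      = (∏ i ∈ Finset.range N, c i) • (1 : Matrix (Fin 2) (Fin 2) ℂ) := by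
  induction N with
  | zero => simp
  | succ n ih =>
      rw [List.range_succ, List.map_append, List.prod_append, ih, Finset.prod_range_succ]
      simp [Matrix.smul_mul, Matrix.mul_smul, smul_smul, mul_comm]

private lemma aux_sub (A B Z k : ℂ) (hk0 : k ≠ 0) (hz0 : 1 - Z/k^2 ≠ 0) :
    (1 - A/k^2) * (1 - B/k^2) / (1 - Z/k^2)^2 - 1
    = ((2*Z - A - B + (A*B - Z^2)/k^2) / (1 - Z/k^2)^2) / k^2 := by
  have e2 : (1 - A/k^2) * (1 - B/k^2) - (1 - Z/k^2)^2
      = (2*Z - A - B + (A*B - Z^2)/k^2)/k^2 := by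
    field_simp
    ring
  rw [div_sub_one (pow_ne_zero 2 hz0), e2, div_div, div_div]
  ring

private lemma aux_alg (pi' lm lp l0 LL Pa Pb Pz : ℂ) (hpi : pi' ≠ 0) (hl : l0 ≠ 0)
    (hLL : LL ≠ 0) (hPz : Pz ≠ 0) :
    (pi' * (lm/LL) * Pa) * (pi' * (lp/LL) * Pb) / (pi' * (l0/LL) * Pz)^2
      = (lm * lp / l0^2) * (Pa * Pb / Pz^2) := by
  field_simp

/-- For `M > 0`, `L > 0` and `λ ∈ ℂ` with `λ + nL ≠ 0` for all `n ∈ ℤ`, the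
product `((λ−M)(λ+M)/λ²) ∏_{n=1}^∞ ((λ+nL)²−M²)((λ−nL)²−M²)/((λ+nL)²(λ−nL)²)` converges to
`sin(π(λ−M)/L) sin(π(λ+M)/L)/sin²(πλ/L)`; consequently the monodromy matrix of the periodic
Schwarzschild solution, `∏_{n∈ℤ} T₀(λ+nL)`, equals
`−(sin(π(λ−M)/L) sin(π(λ+M)/L)/sin²(πλ/L)) σ₃`. -/
theorem statement12 (M L : ℝ) (hM : 0 < M) (hL : 0 < L) (lam : ℂ)
    (hlam : ∀ n : ℤ, lam + (n : ℂ) * (L : ℂ) ≠ 0) :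
    Multipliable (fun n : ℕ =>
      ((lam + ((n : ℂ) + 1) * L)^2 - (M : ℂ)^2) * ((lam - ((n : ℂ) + 1) * L)^2 - (M : ℂ)^2) /
        ((lam + ((n : ℂ) + 1) * L)^2 * (lam - ((n : ℂ) + 1) * L)^2)) ∧
    ((lam - (M : ℂ)) * (lam + (M : ℂ)) / lam^2) * ∏' n : ℕ,
      (((lam + ((n : ℂ) + 1) * L)^2 - (M : ℂ)^2) * ((lam - ((n : ℂ) + 1) * L)^2 - (M : ℂ)^2) /
        ((lam + ((n : ℂ) + 1) * L)^2 * (lam - ((n : ℂ) + 1) * L)^2))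
      = Complex.sin ((Real.pi : ℂ) * (lam - M) / L) * Complex.sin ((Real.pi : ℂ) * (lam + M) / L) /
          (Complex.sin ((Real.pi : ℂ) * lam / L))^2 ∧
    Filter.Tendsto
      (fun N : ℕ => schwT M lam *
        ((List.range N).map (fun n =>
          schwT M (lam + ((n : ℂ) + 1) * L) * schwT M (lam - ((n : ℂ) + 1) * L))).prod)
      Filter.atTop
      (nhds ((-(Complex.sin ((Real.pi : ℂ) * (lam - M) / L) *
          Complex.sin ((Real.pi : ℂ) * (lam + M) / L) /
          (Complex.sin ((Real.pi : ℂ) * lam / L))^2)) • pauli3)) := by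
  have hL' : (L:ℂ) ≠ 0 := Complex.ofReal_ne_zero.mpr hL.ne'
  have hπ : ((Real.pi : ℝ) : ℂ) ≠ 0 := Complex.ofReal_ne_zero.mpr Real.pi_ne_zero
  have hlam0 : lam ≠ 0 := by simpa using hlam 0
  have hp : ∀ n : ℕ, lam + ((n:ℂ)+1) * L ≠ 0 := fun n => by
    have := hlam (n+1); push_cast at this; simpa using this
  have hm : ∀ n : ℕ, lam - ((n:ℂ)+1) * L ≠ 0 := fun n => by
    have := hlam (-(n+1)); push_cast at this
    intro h; exact this (by linear_combination h)
  have hk : ∀ n : ℕ, ((n:ℂ)+1) ≠ 0 := fun n => Nat.cast_add_one_ne_zero n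
  set F : ℕ → ℂ := fun n =>
    ((lam + ((n : ℂ) + 1) * L)^2 - (M : ℂ)^2) * ((lam - ((n : ℂ) + 1) * L)^2 - (M : ℂ)^2) /
      ((lam + ((n : ℂ) + 1) * L)^2 * (lam - ((n : ℂ) + 1) * L)^2) with hF
  -- nonvanishing of the denominator factors
  have hzk' : ∀ k : ℂ, k ≠ 0 → lam + k * L ≠ 0 → lam - k * L ≠ 0 →
      (1 - (lam/L)^2/k^2) ≠ 0 := by
    intro k hk0 hpk hmk
    have h1 : 1 - (lam/L)^2/k^2 = -((lam - k*L) * (lam + k*L)) / ((L:ℂ)^2 * k^2) := by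
      field_simp; ring
    rw [h1]
    exact div_ne_zero (neg_ne_zero.mpr (mul_ne_zero hmk hpk))
      (mul_ne_zero (pow_ne_zero _ hL') (pow_ne_zero _ hk0))
  have hzk : ∀ n : ℕ, (1 - (lam/L)^2/((n:ℂ)+1)^2) ≠ 0 :=
    fun n => hzk' _ (hk n) (hp n) (hm n)
  -- the term identity
  have key' : ∀ k : ℂ, k ≠ 0 → lam + k * L ≠ 0 → lam - k * L ≠ 0 →
      ((lam + k * L)^2 - (M : ℂ)^2) * ((lam - k * L)^2 - (M : ℂ)^2) /
        ((lam + k * L)^2 * (lam - k * L)^2)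
      = (1 - ((lam - M)/L)^2/k^2) * (1 - ((lam + M)/L)^2/k^2) / (1 - (lam/L)^2/k^2)^2 := by
    intro k hk0 hpk hmk
    rw [div_eq_div_iff (mul_ne_zero (pow_ne_zero _ hpk) (pow_ne_zero _ hmk))
      (pow_ne_zero _ (hzk' k hk0 hpk hmk))]
    field_simp
    ring
  have key : ∀ n : ℕ, F n
      = (1 - ((lam - M)/L)^2/((n:ℂ)+1)^2) * (1 - ((lam + M)/L)^2/((n:ℂ)+1)^2)
          / (1 - (lam/L)^2/((n:ℂ)+1)^2)^2 :=
    fun n => key' _ (hk n) (hp n) (hm n)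
  -- summability of F - 1
  have hsub' : ∀ k : ℂ, k ≠ 0 → (1 - (lam/L)^2/k^2) ≠ 0 →
      (1 - ((lam - M)/L)^2/k^2) * (1 - ((lam + M)/L)^2/k^2) / (1 - (lam/L)^2/k^2)^2 - 1
      = (((2*(lam/L)^2 - ((lam-M)/L)^2 - ((lam+M)/L)^2)
          + (((lam-M)/L)^2*((lam+M)/L)^2 - (lam/L)^4) / k^2) / (1 - (lam/L)^2/k^2)^2) / k^2 := by
    intro k hk0 hz0
    have := aux_sub (((lam - M)/L)^2) (((lam + M)/L)^2) ((lam/L)^2) k hk0 hz0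
    rw [this]
    congr 2
    ring
  have hw : Tendsto (fun n : ℕ => ((((n:ℂ)+1))^2)⁻¹) atTop (𝓝 0) := by
    rw [tendsto_zero_iff_norm_tendsto_zero]
    have heq : ∀ n : ℕ, ‖((((n:ℂ)+1))^2)⁻¹‖ = ((((n:ℝ)+1))^2)⁻¹ := by
      intro n
      have h1 : ((n:ℂ)+1) = ((n+1 : ℕ) : ℂ) := by push_cast; ring
      rw [h1, norm_inv, norm_pow, Complex.norm_natCast]
      push_cast; ring
    have hreal : Tendsto (fun n : ℕ => ((((n:ℝ)+1))^2)⁻¹) atTop (𝓝 0) := by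
      apply Filter.Tendsto.inv_tendsto_atTop
      apply Filter.Tendsto.comp (tendsto_pow_atTop (two_ne_zero))
      exact tendsto_atTop_add_const_right _ 1 tendsto_natCast_atTop_atTop
    exact hreal.congr (fun n => (heq n).symm)
  have hg : Tendsto (fun n : ℕ => ((2*(lam/L)^2 - ((lam-M)/L)^2 - ((lam+M)/L)^2)
        + (((lam-M)/L)^2*((lam+M)/L)^2 - (lam/L)^4) / (((n:ℂ)+1))^2)
        / (1 - (lam/L)^2/((n:ℂ)+1)^2)^2) atTop
      (𝓝 (2*(lam/L)^2 - ((lam-M)/L)^2 - ((lam+M)/L)^2)) := by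
    have h1 : Tendsto (fun n : ℕ => (2*(lam/L)^2 - ((lam-M)/L)^2 - ((lam+M)/L)^2)
        + (((lam-M)/L)^2*((lam+M)/L)^2 - (lam/L)^4) / (((n:ℂ)+1))^2) atTop
        (𝓝 (2*(lam/L)^2 - ((lam-M)/L)^2 - ((lam+M)/L)^2)) := by
      have := tendsto_const_nhds (x := (2*(lam/L)^2 - ((lam-M)/L)^2 - ((lam+M)/L)^2 : ℂ))
        (f := (atTop : Filter ℕ))
      simp only [div_eq_mul_inv]
      simpa [div_eq_mul_inv] using this.add ((tendsto_const_nhds (x := (((lam-M)/L)^2*((lam+M)/L)^2 - (lam/L)^4 : ℂ))).mul hw)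
    have h2 : Tendsto (fun n : ℕ => (1 - (lam/L)^2/((n:ℂ)+1)^2)^2) atTop (𝓝 1) := by
      have : Tendsto (fun n : ℕ => 1 - (lam/L)^2/((n:ℂ)+1)^2) atTop (𝓝 1) := by
        have := (tendsto_const_nhds (x := ((lam/L)^2 : ℂ)) (f := (atTop : Filter ℕ))).mul hw
        simp only [div_eq_mul_inv]
        simpa [div_eq_mul_inv] using (tendsto_const_nhds (x := (1:ℂ))).sub this
      simpa using this.pow 2
    simpa [Pi.div_def] using h1.div h2 one_ne_zero
  obtain ⟨C, hC⟩ : ∃ C : ℝ, ∀ n : ℕ, ‖((2*(lam/L)^2 - ((lam-M)/L)^2 - ((lam+M)/L)^2)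
        + (((lam-M)/L)^2*((lam+M)/L)^2 - (lam/L)^4) / (((n:ℂ)+1))^2)
        / (1 - (lam/L)^2/((n:ℂ)+1)^2)^2‖ ≤ C := by
    obtain ⟨C, hC⟩ := hg.norm.bddAbove_range
    exact ⟨C, fun n => hC (Set.mem_range_self n)⟩
  have hsummable_aux : Summable (fun n : ℕ => C * ((((n:ℝ)+1))^2)⁻¹) := by
    apply Summable.mul_left
    apply Summable.of_norm_bounded_eventually_nat (g := fun n : ℕ => ((n:ℝ)^2)⁻¹)
    · simpa [one_div] using summable_one_div_nat_pow.mpr (le_refl 2)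
    · filter_upwards [Filter.eventually_ge_atTop 1] with n hn
      rw [Real.norm_eq_abs, abs_of_nonneg (by positivity)]
      apply inv_anti₀ (by positivity)
      have : (1:ℝ) ≤ (n:ℝ) := by exact_mod_cast hn
      nlinarith
  have hFsub : Summable (fun n : ℕ => F n - 1) := by
    apply Summable.of_norm_bounded hsummable_aux
    intro n
    have h1 : ((n:ℂ)+1) = ((n+1 : ℕ) : ℂ) := by push_cast; ring
    have h2 : ‖((n:ℂ)+1)‖^2 = ((n:ℝ)+1)^2 := by
      rw [h1, Complex.norm_natCast]; push_cast; ring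
    rw [key n, hsub' _ (hk n) (hzk n), norm_div, norm_pow, h2, div_eq_mul_inv]
    exact mul_le_mul_of_nonneg_right (hC n) (by positivity)
  have hMult : Multipliable F := myMultipliable hFsub
  -- Euler products
  have hEa := Complex.tendsto_euler_sin_prod ((lam - M)/L)
  have hEb := Complex.tendsto_euler_sin_prod ((lam + M)/L)
  have hEz := Complex.tendsto_euler_sin_prod (lam/L)
  have hsinz : Complex.sin ((Real.pi:ℂ) * (lam/L)) ≠ 0 := by
    rw [Complex.sin_ne_zero_iff]
    intro k0 h
    have h2 : lam / L * (Real.pi:ℂ) = (k0:ℂ) * (Real.pi:ℂ) := by rw [mul_comm] at h; exact h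
    have h3 : lam / L = (k0:ℂ) := mul_right_cancel₀ hπ h2
    have h4 : lam = (k0:ℂ) * L := (div_eq_iff hL').mp h3
    exact hlam (-k0) (by push_cast; rw [h4]; ring)
  have hPz_ne : ∀ n : ℕ, (∏ j ∈ Finset.range n, (1 - (lam/L)^2/((j:ℂ)+1)^2)) ≠ 0 :=
    fun n => Finset.prod_ne_zero_iff.mpr fun j _ => hzk j
  have hprodF : ∀ n : ℕ, ∏ j ∈ Finset.range n, F j =
      (∏ j ∈ Finset.range n, (1 - ((lam-M)/L)^2/((j:ℂ)+1)^2))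
        * (∏ j ∈ Finset.range n, (1 - ((lam+M)/L)^2/((j:ℂ)+1)^2))
        / (∏ j ∈ Finset.range n, (1 - (lam/L)^2/((j:ℂ)+1)^2))^2 := by
    intro n
    rw [Finset.prod_congr rfl (fun j _ => key j), ← Finset.prod_pow, ← Finset.prod_mul_distrib,
      ← Finset.prod_div_distrib]
  have hAlg : ∀ n : ℕ,
      ((Real.pi:ℂ) * ((lam - M)/L) * ∏ j ∈ Finset.range n, (1 - ((lam-M)/L)^2/((j:ℂ)+1)^2))
        * ((Real.pi:ℂ) * ((lam + M)/L) * ∏ j ∈ Finset.range n, (1 - ((lam+M)/L)^2/((j:ℂ)+1)^2))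
        / ((Real.pi:ℂ) * (lam/L) * ∏ j ∈ Finset.range n, (1 - (lam/L)^2/((j:ℂ)+1)^2))^2
      = ((lam - M) * (lam + M) / lam^2) * ∏ j ∈ Finset.range n, F j := by
    intro n
    rw [hprodF n]
    exact aux_alg _ (lam - M) (lam + M) lam L _ _ _ hπ hlam0 hL' (hPz_ne n)
  have hcomb : Tendsto (fun n : ℕ =>
      ((lam - M) * (lam + M) / lam^2) * ∏ j ∈ Finset.range n, F j) atTop
      (𝓝 (Complex.sin ((Real.pi:ℂ) * ((lam - M)/L)) * Complex.sin ((Real.pi:ℂ) * ((lam + M)/L))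
          / (Complex.sin ((Real.pi:ℂ) * (lam/L)))^2)) := by
    have := (hEa.mul hEb).div (hEz.pow 2) (pow_ne_zero 2 hsinz)
    exact this.congr hAlg
  have hT2 : Tendsto (fun n : ℕ =>
      ((lam - M) * (lam + M) / lam^2) * ∏ j ∈ Finset.range n, F j) atTop
      (𝓝 (((lam - M) * (lam + M) / lam^2) * ∏' n, F n)) :=
    (hMult.hasProd.tendsto_prod_nat).const_mul _
  have heq2 : ((lam - M) * (lam + M) / lam^2) * ∏' n, F n
      = Complex.sin ((Real.pi : ℂ) * (lam - M) / L) * Complex.sin ((Real.pi : ℂ) * (lam + M) / L) /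
          (Complex.sin ((Real.pi : ℂ) * lam / L))^2 := by
    rw [mul_div_assoc ((Real.pi:ℂ)) (lam - M) L, mul_div_assoc ((Real.pi:ℂ)) (lam + M) L,
      mul_div_assoc ((Real.pi:ℂ)) lam L]
    exact tendsto_nhds_unique hT2 hcomb
  refine ⟨hMult, heq2, ?_⟩
  -- matrix part
  have hpair : ∀ n : ℕ,
      schwT M (lam + ((n:ℂ)+1) * L) * schwT M (lam - ((n:ℂ)+1) * L)
        = F n • (1 : Matrix (Fin 2) (Fin 2) ℂ) := by
    intro n
    rw [schwT_pair]
    congr 1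
    rw [hF, div_mul_div_comm]
    congr 1 <;> ring
  have hList : ∀ N : ℕ, schwT M lam *
      ((List.range N).map (fun n =>
        schwT M (lam + ((n : ℂ) + 1) * L) * schwT M (lam - ((n : ℂ) + 1) * L))).prod
      = (-(((lam - M) * (lam + M) / lam^2) * ∏ i ∈ Finset.range N, F i)) • pauli3 := by
    intro N
    rw [show (do let a ← List.range N; pure ((a:ℂ))) = (List.range N).map (fun a : ℕ => (a:ℂ))
        from List.flatMap_pure_eq_map _ _, List.map_map]
    rw [show ((fun n : ℂ => schwT M (lam + (n + 1) * L) * schwT M (lam - (n + 1) * L))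
          ∘ (fun a : ℕ => (a:ℂ)))
        = fun n : ℕ => F n • (1 : Matrix (Fin 2) (Fin 2) ℂ) from funext fun n => hpair n]
    rw [list_prod_smul_one, schwT, Matrix.smul_mul, Matrix.mul_smul, smul_smul, mul_one,
      neg_mul]
  have hT3 : Tendsto (fun N : ℕ => -(((lam - M) * (lam + M) / lam^2) * ∏ i ∈ Finset.range N, F i))
      atTop (𝓝 (-(Complex.sin ((Real.pi : ℂ) * (lam - M) / L) *
        Complex.sin ((Real.pi : ℂ) * (lam + M) / L) /
        (Complex.sin ((Real.pi : ℂ) * lam / L))^2))) := by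
    rw [← heq2]
    exact hT2.neg
  have := hT3.smul_const pauli3
  exact this.congr (fun N => (hList N).symm)
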